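/- For every t ∈ (0, τ], the identity ∫_(0,t] (1/K(u−)) dN(u) + ∫_(0, X∧t] N(u) d(1/K)(u) = N(X ∧ t)/K(X ∧ t) holds exactly, where d(1/K) denotes Lebesgue–Stieltjes integration against the function u ↦ 1/K(u). -/

import Mathlib

open MeasureTheory Set

/-- Lebesgue–Stieltjes integral of `f` over `s` against the signed measure `μp - μm`. -/
noncomputable def lsInt (μp μm : Measure ℝ) (s : Set ℝ) (f : ℝ → ℝ) : ℝ :=
  (∫ u in s, f u ∂μp) - (∫ u in s, f u ∂μm)

open Filter Topology

private lemma aux_mono_Ioc (ν : Measure ℝ) : Monotone fun u : ℝ => ν (Ioc 0 u) :=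
  fun _ _ hab => measure_mono (Ioc_subset_Ioc_right hab)

private lemma aux_mono_Ioo (ν : Measure ℝ) : Monotone fun u : ℝ => ν (Ioo 0 u) :=
  fun _ _ hab => measure_mono (Ioo_subset_Ioo_right hab)

private lemma aux_meas_Ioc (ν : Measure ℝ) : Measurable fun u : ℝ => ν (Ioc 0 u) :=
  (aux_mono_Ioc ν).measurable

private lemma aux_meas_Ioo (ν : Measure ℝ) : Measurable fun u : ℝ => ν (Ioo 0 u) :=
  (aux_mono_Ioo ν).measurable

/-- A bounded measurable function of the form `u ↦ (ν (g u)).toReal` is integrable against any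
finite measure. -/
private lemma aux_integrable (μ ν : Measure ℝ) [IsFiniteMeasure μ] [IsFiniteMeasure ν]
    {g : ℝ → Set ℝ} (hm : Measurable fun u => ν (g u)) :
    Integrable (fun u => (ν (g u)).toReal) μ := by
  refine Integrable.mono' (integrable_const (ν Set.univ).toReal)
    hm.ennreal_toReal.aestronglyMeasurable ?_
  filter_upwards with u
  rw [Real.norm_eq_abs, abs_of_nonneg ENNReal.toReal_nonneg]
  exact ENNReal.toReal_mono (measure_ne_top ν _) (measure_mono (subset_univ _))

/-- Integration-by-parts skeleton coming from Fubini on the square `(0,T]²`. -/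
private lemma aux_parts (μ ν : Measure ℝ) [IsFiniteMeasure μ] [IsFiniteMeasure ν] (T : ℝ) :
    (∫ u in Ioc (0:ℝ) T, (ν (Ioc 0 u)).toReal ∂μ)
      + (∫ v in Ioc (0:ℝ) T, (μ (Ioo 0 v)).toReal ∂ν)
    = (μ (Ioc 0 T)).toReal * (ν (Ioc 0 T)).toReal := by
  set A : Set (ℝ × ℝ) := {p | (0 < p.1 ∧ p.1 ≤ T) ∧ 0 < p.2 ∧ p.2 ≤ p.1} with hAdef
  set B : Set (ℝ × ℝ) := {p | (0 < p.2 ∧ p.2 ≤ T) ∧ 0 < p.1 ∧ p.1 < p.2} with hBdef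
  have hA : MeasurableSet A :=
    (((measurableSet_lt measurable_const measurable_fst).inter
      (measurableSet_le measurable_fst measurable_const)).inter
      ((measurableSet_lt measurable_const measurable_snd).inter
      (measurableSet_le measurable_snd measurable_fst)))
  have hB : MeasurableSet B :=
    (((measurableSet_lt measurable_const measurable_snd).inter
      (measurableSet_le measurable_snd measurable_const)).inter
      ((measurableSet_lt measurable_const measurable_fst).inter
      (measurableSet_lt measurable_fst measurable_snd)))
  have hunion : A ∪ B = Ioc (0:ℝ) T ×ˢ Ioc (0:ℝ) T := by
    ext p
    simp only [hAdef, hBdef, mem_union, mem_setOf_eq, mem_prod, mem_Ioc]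
    constructor
    · rintro (⟨⟨h1, h2⟩, h3, h4⟩ | ⟨⟨h1, h2⟩, h3, h4⟩)
      · exact ⟨⟨h1, h2⟩, h3, h4.trans h2⟩
      · exact ⟨⟨h3, h4.le.trans h2⟩, h1, h2⟩
    · rintro ⟨⟨h1, h2⟩, h3, h4⟩
      rcases le_or_gt p.2 p.1 with h | h
      · exact Or.inl ⟨⟨h1, h2⟩, h3, h⟩
      · exact Or.inr ⟨⟨h3, h4⟩, h1, h⟩
  have hdisj : Disjoint A B := by
    rw [Set.disjoint_left]
    rintro p ⟨⟨_, _⟩, _, h4⟩ ⟨⟨_, _⟩, _, h8⟩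
    exact absurd (h8.trans_le h4) (lt_irrefl _)
  have hAval : (μ.prod ν) A = ∫⁻ u in Ioc (0:ℝ) T, ν (Ioc 0 u) ∂μ := by
    rw [Measure.prod_apply hA, ← lintegral_indicator measurableSet_Ioc]
    congr 1
    funext x
    by_cases hx : x ∈ Ioc (0:ℝ) T
    · rw [indicator_of_mem hx]
      congr 1
      ext y
      simp only [hAdef, mem_preimage, mem_setOf_eq, mem_Ioc]
      exact ⟨fun h => h.2, fun h => ⟨⟨hx.1, hx.2⟩, h⟩⟩
    · rw [indicator_of_notMem hx]
      have : Prod.mk x ⁻¹' A = (∅ : Set ℝ) := by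
        ext y
        simp only [hAdef, mem_preimage, mem_setOf_eq, mem_empty_iff_false, iff_false]
        rintro ⟨h1, _⟩
        exact hx ⟨h1.1, h1.2⟩
      rw [this, measure_empty]
  have hBval : (μ.prod ν) B = ∫⁻ v in Ioc (0:ℝ) T, μ (Ioo 0 v) ∂ν := by
    rw [Measure.prod_apply_symm hB, ← lintegral_indicator measurableSet_Ioc]
    congr 1
    funext y
    by_cases hy : y ∈ Ioc (0:ℝ) T
    · rw [indicator_of_mem hy]
      congr 1
      ext x
      simp only [hBdef, mem_preimage, mem_setOf_eq, mem_Ioo]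
      exact ⟨fun h => h.2, fun h => ⟨⟨hy.1, hy.2⟩, h⟩⟩
    · rw [indicator_of_notMem hy]
      have : (fun x => (x, y)) ⁻¹' B = (∅ : Set ℝ) := by
        ext x
        simp only [hBdef, mem_preimage, mem_setOf_eq, mem_empty_iff_false, iff_false]
        rintro ⟨h1, _⟩
        exact hy ⟨h1.1, h1.2⟩
      rw [this, measure_empty]
  have h1 : ∫ u in Ioc (0:ℝ) T, (ν (Ioc 0 u)).toReal ∂μ
      = ((μ.prod ν) A).toReal := by
    rw [hAval, integral_toReal ((aux_meas_Ioc ν).aemeasurable)]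
    filter_upwards with u using measure_lt_top _ _
  have h2 : ∫ v in Ioc (0:ℝ) T, (μ (Ioo 0 v)).toReal ∂ν
      = ((μ.prod ν) B).toReal := by
    rw [hBval, integral_toReal ((aux_meas_Ioo μ).aemeasurable)]
    filter_upwards with v using measure_lt_top _ _
  rw [h1, h2, ← ENNReal.toReal_add (measure_ne_top _ _) (measure_ne_top _ _),
    ← measure_union hdisj hB, hunion, Measure.prod_prod, ENNReal.toReal_mul]

private lemma aux_split (μ : Measure ℝ) [IsFiniteMeasure μ] (s : Set ℝ) {f g : ℝ → ℝ}
    (hf : IntegrableOn f s μ) (hg : IntegrableOn g s μ) :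
    ∫ u in s, (1 + f u - g u) ∂μ
      = (μ s).toReal + (∫ u in s, f u ∂μ) - ∫ u in s, g u ∂μ := by
  have hfun : (fun u : ℝ => 1 + f u - g u) = fun u => 1 + (f u - g u) :=
    funext fun u => by ring
  have h2 : ∫ u in s, (f u - g u) ∂μ = (∫ u in s, f u ∂μ) - ∫ u in s, g u ∂μ :=
    integral_sub hf hg
  have h3 : ∫ u in s, (1 + (f u - g u)) ∂μ
      = (∫ _ in s, (1:ℝ) ∂μ) + ∫ u in s, (f u - g u) ∂μ :=
    integral_add (integrable_const 1) (hf.sub hg)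
  rw [hfun, h3, h2, integral_const]
  simp only [smul_eq_mul, mul_one, Measure.real, Measure.restrict_apply_univ]
  ring

/-- Fix `0 < τ < ∞` and `X ∈ (0, τ]`.  Let `K : [0,∞) → ℝ` be
right-continuous, of bounded variation on `[0, τ]`, with `K 0 = 1` and `K ≠ 0` on
`(0, τ]`; `Kl = K(·-)` is the left limit.  Let `N : [0,∞) → ℝ` be right-continuous,
of bounded variation on `[0, τ]` (`dN = νp - νm` via `hNrep`), with `N 0 = 0` and
`N u = N (u ⊓ X)` for all `u ≥ 0`.  The reciprocal `u ↦ 1/K(u)` has Lebesgue–Stieltjes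
measure `d(1/K) = ρp - ρm` (via `hKinvrep`).  Then for every `t ∈ (0, τ]`:

`∫_(0,t] (1/K(u-)) dN(u) + ∫_(0, X∧t] N(u) d(1/K)(u) = N(X ∧ t)/K(X ∧ t)`. -/
theorem stmt_5
    (τ X : ℝ) (K Kl N : ℝ → ℝ) (νp νm ρp ρm : Measure ℝ)
    [IsFiniteMeasure νp] [IsFiniteMeasure νm] [IsFiniteMeasure ρp] [IsFiniteMeasure ρm]
    (hτ : 0 < τ) (hX : X ∈ Ioc 0 τ)
    (hK0 : K 0 = 1) (hKne : ∀ u ∈ Ioc (0 : ℝ) τ, K u ≠ 0)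
    (hKl : ∀ u ∈ Ioc (0 : ℝ) τ,
      Filter.Tendsto K (nhdsWithin u (Iio u)) (nhds (Kl u)))
    -- `ρp - ρm` is the Lebesgue–Stieltjes measure of `u ↦ 1/K(u)` on `[0, τ]`
    (hKinvrep : ∀ s t : ℝ, 0 ≤ s → s ≤ t → t ≤ τ →
      1 / K t - 1 / K s = (ρp (Ioc s t)).toReal - (ρm (Ioc s t)).toReal)
    (hN0 : N 0 = 0) (hNstop : ∀ u : ℝ, 0 ≤ u → N u = N (min u X))
    (hNrep : ∀ s t : ℝ, 0 ≤ s → s ≤ t → t ≤ τ →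
      N t - N s = (νp (Ioc s t)).toReal - (νm (Ioc s t)).toReal) :
    ∀ t ∈ Ioc (0 : ℝ) τ,
      lsInt νp νm (Ioc 0 t) (fun u => 1 / Kl u)
        + lsInt ρp ρm (Ioc 0 (min X t)) (fun u => N u)
        = N (min X t) / K (min X t) := by
  intro t ht
  set T := min X t with hTdef
  have hT0 : 0 < T := lt_min hX.1 ht.1
  have hTτ : T ≤ τ := (min_le_right X t).trans ht.2
  have hTX : T ≤ X := min_le_left _ _
  -- pointwise representations of N and 1/K
  have hNeq : ∀ u : ℝ, 0 ≤ u → u ≤ τ →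
      N u = (νp (Ioc 0 u)).toReal - (νm (Ioc 0 u)).toReal := by
    intro u h0 h1
    have := hNrep 0 u le_rfl h0 h1
    rw [hN0] at this; linarith
  have hKinv : ∀ u : ℝ, 0 ≤ u → u ≤ τ →
      1 / K u = 1 + (ρp (Ioc 0 u)).toReal - (ρm (Ioc 0 u)).toReal := by
    intro u h0 h1
    have := hKinvrep 0 u le_rfl h0 h1
    rw [hK0, div_one] at this; linarith
  -- left-limit representation of 1/Kl
  have hKleq : ∀ u ∈ Ioc (0:ℝ) τ,
      1 / Kl u = 1 + (ρp (Ioo 0 u)).toReal - (ρm (Ioo 0 u)).toReal := by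
    rintro u ⟨hu0, huτ⟩
    set s : ℕ → ℝ := fun n => u - u / ((n:ℝ) + 2) with hsdef
    have hs_mem : ∀ n : ℕ, s n ∈ Ioo (0:ℝ) u := by
      intro n
      have h2 : (0:ℝ) < (n:ℝ) + 2 := by positivity
      have hlt : u / ((n:ℝ) + 2) < u := by
        rw [div_lt_iff₀ h2]; nlinarith
      have hpos : 0 < u / ((n:ℝ) + 2) := by positivity
      exact ⟨by simp only [hsdef]; linarith, by simp only [hsdef]; linarith⟩
    have hs_mono : Monotone s := by
      intro a b hab
      have hab' : ((a:ℝ)) ≤ (b:ℝ) := Nat.cast_le.mpr hab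
      have hle : u / ((b:ℝ) + 2) ≤ u / ((a:ℝ) + 2) := by
        gcongr
        all_goals first | exact hu0.le | linarith
      simp only [hsdef]; linarith
    have hs_tendsto : Tendsto s atTop (𝓝 u) := by
      have h1 : Tendsto (fun n : ℕ => u / ((n:ℝ) + 2)) atTop (𝓝 0) := by
        apply Tendsto.div_atTop tendsto_const_nhds
        exact tendsto_atTop_add_const_right _ 2 tendsto_natCast_atTop_atTop
      have := (tendsto_const_nhds (x := u) (f := (atTop : Filter ℕ))).sub h1
      simpa using this
    have hUnion : (⋃ n, Ioc (0:ℝ) (s n)) = Ioo 0 u := by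
      ext x
      simp only [mem_iUnion, mem_Ioc, mem_Ioo]
      constructor
      · rintro ⟨n, hx0, hxn⟩
        exact ⟨hx0, lt_of_le_of_lt hxn (hs_mem n).2⟩
      · rintro ⟨hx0, hxu⟩
        obtain ⟨n, hn⟩ := (hs_tendsto.eventually_const_lt hxu).exists
        exact ⟨n, hx0, hn.le⟩
    have hmeas : ∀ (ρ : Measure ℝ) [IsFiniteMeasure ρ],
        Tendsto (fun n => (ρ (Ioc 0 (s n))).toReal) atTop (𝓝 ((ρ (Ioo 0 u)).toReal)) := by
      intro ρ _
      have h1 : Tendsto (fun n => ρ (Ioc 0 (s n))) atTop (𝓝 (ρ (Ioo 0 u))) := by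
        rw [← hUnion]
        exact tendsto_measure_iUnion_atTop
          (fun a b hab => Ioc_subset_Ioc_right (hs_mono hab))
      exact (ENNReal.tendsto_toReal (measure_ne_top _ _)).comp h1
    set L : ℝ := 1 + (ρp (Ioo 0 u)).toReal - (ρm (Ioo 0 u)).toReal with hLdef
    have hlim1 : Tendsto (fun n => 1 / K (s n)) atTop (𝓝 L) := by
      apply Tendsto.congr (f₁ := fun n =>
        1 + (ρp (Ioc 0 (s n))).toReal - (ρm (Ioc 0 (s n))).toReal)
      · intro n
        exact (hKinv _ (hs_mem n).1.le ((hs_mem n).2.le.trans huτ)).symm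
      · exact (tendsto_const_nhds.add (hmeas ρp)).sub (hmeas ρm)
    have hlim2 : Tendsto (fun n => K (s n)) atTop (𝓝 (Kl u)) := by
      apply (hKl u ⟨hu0, huτ⟩).comp
      apply tendsto_nhdsWithin_of_tendsto_nhds_of_eventually_within _ hs_tendsto
      exact Filter.Eventually.of_forall fun n => (hs_mem n).2
    have hprodlim : Tendsto (fun n => K (s n) * (1 / K (s n))) atTop (𝓝 (Kl u * L)) :=
      hlim2.mul hlim1
    have hone : (fun n => K (s n) * (1 / K (s n))) = fun _ => (1:ℝ) := by
      funext n
      exact mul_one_div_cancel (hKne (s n) ⟨(hs_mem n).1, (hs_mem n).2.le.trans huτ⟩)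
    rw [hone] at hprodlim
    have hKL : Kl u * L = 1 := (tendsto_nhds_unique tendsto_const_nhds hprodlim).symm
    exact (eq_one_div_of_mul_eq_one_right hKL).symm
  -- integrability of the relevant functions
  have hKlint : ∀ (μ : Measure ℝ) [IsFiniteMeasure μ] (s : Set ℝ),
      MeasurableSet s → s ⊆ Ioc 0 τ → IntegrableOn (fun u => 1 / Kl u) s μ := by
    intro μ _ s hs hsub
    have hint : IntegrableOn
        (fun u => 1 + (ρp (Ioo 0 u)).toReal - (ρm (Ioo 0 u)).toReal) s μ :=
      ((integrable_const 1).add (aux_integrable _ ρp (aux_meas_Ioo ρp))).sub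
        (aux_integrable _ ρm (aux_meas_Ioo ρm))
    exact hint.congr_fun (fun u hu => (hKleq u (hsub hu)).symm) hs
  -- Step A: the ν-integral over (0,t] equals the one over (0,T]
  have hstop : ∀ (g : ℝ → ℝ),
      (∀ (μ : Measure ℝ) [IsFiniteMeasure μ] (s : Set ℝ),
        MeasurableSet s → s ⊆ Ioc 0 τ → IntegrableOn g s μ) →
      (∫ u in Ioc (0:ℝ) t, g u ∂νp) - (∫ u in Ioc (0:ℝ) t, g u ∂νm)
        = (∫ u in Ioc (0:ℝ) T, g u ∂νp) - (∫ u in Ioc (0:ℝ) T, g u ∂νm) := by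
    intro g hgint
    rcases le_or_gt t X with htX | hXt
    · rw [hTdef, min_eq_right htX]
    · have hTX' : T = X := min_eq_left hXt.le
      -- the two measures agree on (X, t]
      have hagree : ∀ a b : ℝ, X ≤ a → a ≤ b → b ≤ t → νp (Ioc a b) = νm (Ioc a b) := by
        intro a b hXa hab hbt
        have h0a : (0:ℝ) ≤ a := hX.1.le.trans hXa
        have hrep := hNrep a b h0a hab (hbt.trans ht.2)
        have hNa : N a = N X := by
          have := hNstop a h0a
          rwa [min_eq_right hXa] at this
        have hNb : N b = N X := by
          have := hNstop b (h0a.trans hab)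
          rwa [min_eq_right (hXa.trans hab)] at this
        have : (νp (Ioc a b)).toReal = (νm (Ioc a b)).toReal := by
          rw [hNa, hNb] at hrep; linarith
        exact (ENNReal.toReal_eq_toReal_iff' (measure_ne_top _ _) (measure_ne_top _ _)).mp this
      have hres : νp.restrict (Ioc X t) = νm.restrict (Ioc X t) := by
        apply Measure.ext_of_Ioc_finite
        · rw [Measure.restrict_apply_univ, Measure.restrict_apply_univ]
          exact hagree X t le_rfl hXt.le le_rfl
        · intro a b _
          rw [Measure.restrict_apply measurableSet_Ioc,
            Measure.restrict_apply measurableSet_Ioc, Ioc_inter_Ioc]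
          rcases le_or_gt (max a X) (min b t) with hle | hlt
          · exact hagree _ _ (le_max_right a X) hle (min_le_right b t)
          · rw [Ioc_eq_empty (by exact fun h => absurd h (not_lt.mpr hlt.le)), measure_empty,
              measure_empty]
      have hsplit : Ioc (0:ℝ) t = Ioc 0 X ∪ Ioc X t := (Ioc_union_Ioc_eq_Ioc hX.1.le hXt.le).symm
      have hsubX : Ioc (0:ℝ) X ⊆ Ioc 0 τ := Ioc_subset_Ioc_right hX.2
      have hsubXt : Ioc X t ⊆ Ioc (0:ℝ) τ :=
        fun u hu => ⟨hX.1.trans hu.1, hu.2.trans ht.2⟩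
      have hdisj : Disjoint (Ioc (0:ℝ) X) (Ioc X t) := Ioc_disjoint_Ioc_of_le le_rfl
      have hp : ∫ u in Ioc (0:ℝ) t, g u ∂νp
          = (∫ u in Ioc (0:ℝ) X, g u ∂νp) + ∫ u in Ioc X t, g u ∂νp := by
        rw [hsplit]
        exact setIntegral_union hdisj measurableSet_Ioc
          (hgint νp _ measurableSet_Ioc hsubX) (hgint νp _ measurableSet_Ioc hsubXt)
      have hm : ∫ u in Ioc (0:ℝ) t, g u ∂νm
          = (∫ u in Ioc (0:ℝ) X, g u ∂νm) + ∫ u in Ioc X t, g u ∂νm := by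
        rw [hsplit]
        exact setIntegral_union hdisj measurableSet_Ioc
          (hgint νm _ measurableSet_Ioc hsubX) (hgint νm _ measurableSet_Ioc hsubXt)
      have hcancel : ∫ u in Ioc X t, g u ∂νp = ∫ u in Ioc X t, g u ∂νm := by
        rw [show (∫ u in Ioc X t, g u ∂νp) = ∫ u, g u ∂(νp.restrict (Ioc X t)) from rfl, hres]
      rw [hp, hm, hcancel, hTX']
      ring
  -- Step B: the main identity over (0, T]
  have hI : MeasurableSet (Ioc (0:ℝ) T) := measurableSet_Ioc
  have hIsub : Ioc (0:ℝ) T ⊆ Ioc 0 τ := Ioc_subset_Ioc_right hTτ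
  -- abbreviations for the eight integrals
  set A1 := ∫ u in Ioc (0:ℝ) T, (ρp (Ioo 0 u)).toReal ∂νp with hA1
  set A2 := ∫ u in Ioc (0:ℝ) T, (ρm (Ioo 0 u)).toReal ∂νp with hA2
  set A3 := ∫ u in Ioc (0:ℝ) T, (ρp (Ioo 0 u)).toReal ∂νm with hA3
  set A4 := ∫ u in Ioc (0:ℝ) T, (ρm (Ioo 0 u)).toReal ∂νm with hA4
  set B1 := ∫ u in Ioc (0:ℝ) T, (νp (Ioc 0 u)).toReal ∂ρp with hB1
  set B2 := ∫ u in Ioc (0:ℝ) T, (νm (Ioc 0 u)).toReal ∂ρp with hB2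
  set B3 := ∫ u in Ioc (0:ℝ) T, (νp (Ioc 0 u)).toReal ∂ρm with hB3
  set B4 := ∫ u in Ioc (0:ℝ) T, (νm (Ioc 0 u)).toReal ∂ρm with hB4
  set ap := (νp (Ioc (0:ℝ) T)).toReal with hap
  set am := (νm (Ioc (0:ℝ) T)).toReal with ham
  set bp := (ρp (Ioc (0:ℝ) T)).toReal with hbp
  set bm := (ρm (Ioc (0:ℝ) T)).toReal with hbm
  -- Fubini identities
  have e1 : B1 + A1 = bp * ap := aux_parts ρp νp T
  have e2 : B3 + A2 = bm * ap := aux_parts ρm νp T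
  have e3 : B2 + A3 = bp * am := aux_parts ρp νm T
  have e4 : B4 + A4 = bm * am := aux_parts ρm νm T
  -- compute the four integrals appearing in the statement
  have hgν : ∀ (μ : Measure ℝ) [IsFiniteMeasure μ],
      ∫ u in Ioc (0:ℝ) T, (1 / Kl u) ∂μ
        = (μ (Ioc (0:ℝ) T)).toReal + (∫ u in Ioc (0:ℝ) T, (ρp (Ioo 0 u)).toReal ∂μ)
          - ∫ u in Ioc (0:ℝ) T, (ρm (Ioo 0 u)).toReal ∂μ := by
    intro μ _
    rw [setIntegral_congr_fun hI (fun u hu => hKleq u (hIsub hu))]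
    exact aux_split μ _ (aux_integrable _ ρp (aux_meas_Ioo ρp))
      (aux_integrable _ ρm (aux_meas_Ioo ρm))
  have hnρ : ∀ (μ : Measure ℝ) [IsFiniteMeasure μ],
      ∫ u in Ioc (0:ℝ) T, N u ∂μ
        = (∫ u in Ioc (0:ℝ) T, (νp (Ioc 0 u)).toReal ∂μ)
          - ∫ u in Ioc (0:ℝ) T, (νm (Ioc 0 u)).toReal ∂μ := by
    intro μ _
    rw [setIntegral_congr_fun hI
      (fun u hu => hNeq u (hIsub hu).1.le (hIsub hu).2)]
    exact integral_sub (aux_integrable _ νp (aux_meas_Ioc νp))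
      (aux_integrable _ νm (aux_meas_Ioc νm))
  -- assemble
  have hNT : N T = ap - am := hNeq T hT0.le hTτ
  have hKT : 1 / K T = 1 + bp - bm := hKinv T hT0.le hTτ
  have hrhs : N T / K T = (ap - am) * (1 + bp - bm) := by
    rw [div_eq_mul_inv, ← one_div, hNT, hKT]
  unfold lsInt
  rw [hstop (fun u => 1 / Kl u) hKlint, hgν νp, hgν νm, hnρ ρp, hnρ ρm, hrhs]
  rw [← hap, ← ham, ← hA1, ← hA2, ← hA3, ← hA4, ← hB1, ← hB2, ← hB3, ← hB4]
  nlinarith [e1, e2, e3, e4]
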